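/- arXiv:1602.07568 — 3 statements merged into one kernel-verified Lean document; each statement's English description precedes it below -/
import Mathlib

section
/- Let A be an n×n complex matrix with n ≥ 2. Every eigenvalue λ of A satisfies the Brauer ovals-of-Cassini condition: there exist indices i ≠ j such that (|λ - A i i| - r_i^j(A)) · |λ - A j j| ≤ |A i j| · r_j(A), where r_i^j(A) = r_i(A) - |A i j| and r_i(A) = ∑_{k ≠ i} |A i k|. -/
theorem stmt_3 {n : ℕ} (hn : 2 ≤ n) (A : Matrix (Fin n) (Fin n) ℂ) (lam : ℂ)
    (x : Fin n → ℂ) (hx : x ≠ 0) (heig : A.mulVec x = lam • x) :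
    ∃ i j : Fin n, i ≠ j ∧
      (‖lam - A i i‖ -
          ((∑ k ∈ Finset.univ.erase i, ‖A i k‖) - ‖A i j‖)) *
        ‖lam - A j j‖ ≤
      ‖A i j‖ * ∑ k ∈ Finset.univ.erase j, ‖A j k‖ := by
  classical
  -- key inequality at any index p
  have key : ∀ p : Fin n, ‖lam - A p p‖ * ‖x p‖ ≤
      ∑ k ∈ Finset.univ.erase p, ‖A p k‖ * ‖x k‖ := by
    intro p
    have hp : ∑ k, A p k * x k = lam * x p := by
      have := congrFun heig p
      simpa [Matrix.mulVec, dotProduct, Pi.smul_apply] using this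
    have hesum := Finset.add_sum_erase Finset.univ (fun k => A p k * x k) (Finset.mem_univ p)
    have hsplit : (lam - A p p) * x p = ∑ k ∈ Finset.univ.erase p, A p k * x k := by
      rw [← hesum] at hp
      linear_combination -hp
    calc ‖lam - A p p‖ * ‖x p‖
        = ‖(lam - A p p) * x p‖ := (norm_mul _ _).symm
      _ = ‖∑ k ∈ Finset.univ.erase p, A p k * x k‖ := by rw [hsplit]
      _ ≤ ∑ k ∈ Finset.univ.erase p, ‖A p k * x k‖ :=
          norm_sum_le _ _
      _ = ∑ k ∈ Finset.univ.erase p, ‖A p k‖ * ‖x k‖ := by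
          simp [map_mul]
  -- choose i maximizing |x i|
  obtain ⟨i, -, hi⟩ := Finset.exists_max_image Finset.univ (fun k => ‖x k‖)
    ⟨⟨0, by omega⟩, Finset.mem_univ _⟩
  have hM : ∀ k, ‖x k‖ ≤ ‖x i‖ := fun k => hi k (Finset.mem_univ k)
  have hM0 : 0 < ‖x i‖ := by
    obtain ⟨k, hk⟩ := Function.ne_iff.mp hx
    exact lt_of_lt_of_le (by simpa using hk) (hM k)
  have : Nontrivial (Fin n) := Fin.nontrivial_iff_two_le.mpr hn
  obtain ⟨j, hj⟩ := exists_ne i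
  refine ⟨i, j, Ne.symm hj, ?_⟩
  set M := ‖x i‖ with hMdef
  set t := ‖x j‖ with htdef
  have hjmem : j ∈ Finset.univ.erase i := Finset.mem_erase.mpr ⟨hj, Finset.mem_univ j⟩
  -- bound the i-row sum
  have hsum1 : ∑ k ∈ Finset.univ.erase i, ‖A i k‖ * ‖x k‖ ≤
      ((∑ k ∈ Finset.univ.erase i, ‖A i k‖) - ‖A i j‖) * M
        + ‖A i j‖ * t := by
    rw [← Finset.add_sum_erase _ (fun k => ‖A i k‖ * ‖x k‖) hjmem]
    have h1 : ∑ k ∈ (Finset.univ.erase i).erase j, ‖A i k‖ * ‖x k‖ ≤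
        (∑ k ∈ (Finset.univ.erase i).erase j, ‖A i k‖) * M := by
      rw [Finset.sum_mul]
      exact Finset.sum_le_sum fun k _ =>
        mul_le_mul_of_nonneg_left (hM k) (norm_nonneg _)
    have h2 : ∑ k ∈ (Finset.univ.erase i).erase j, ‖A i k‖
        = (∑ k ∈ Finset.univ.erase i, ‖A i k‖) - ‖A i j‖ := by
      rw [← Finset.add_sum_erase _ (fun k => ‖A i k‖) hjmem]
      ring
    rw [h2] at h1
    linarith
  have h1 : ‖lam - A i i‖ * M ≤
      ((∑ k ∈ Finset.univ.erase i, ‖A i k‖) - ‖A i j‖) * M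
        + ‖A i j‖ * t := le_trans (key i) hsum1
  have h2 : ‖lam - A j j‖ * t ≤
      (∑ k ∈ Finset.univ.erase j, ‖A j k‖) * M := by
    refine le_trans (key j) ?_
    rw [Finset.sum_mul]
    exact Finset.sum_le_sum fun k _ =>
      mul_le_mul_of_nonneg_left (hM k) (norm_nonneg _)
  set a := ‖lam - A i i‖
  set s := (∑ k ∈ Finset.univ.erase i, ‖A i k‖) - ‖A i j‖
  set c := ‖A i j‖
  set d := ‖lam - A j j‖
  set rj := ∑ k ∈ Finset.univ.erase j, ‖A j k‖
  have hc : 0 ≤ c := norm_nonneg _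
  have hd : 0 ≤ d := norm_nonneg _
  have ht : 0 ≤ t := norm_nonneg _
  have hrj : 0 ≤ rj := Finset.sum_nonneg fun k _ => norm_nonneg _
  rcases le_or_gt a s with h | h
  · have : (a - s) * d ≤ 0 := mul_nonpos_of_nonpos_of_nonneg (by linarith) hd
    exact le_trans this (mul_nonneg hc hrj)
  · nlinarith [mul_le_mul_of_nonneg_right h1 hd, mul_le_mul_of_nonneg_left h2 hc, hM0]
end

section
/- Let A be an n×n complex matrix, n ≥ 2, and let S be a nonempty proper subset of the index set N = {1,...,n}, with complement S̄. Decompose each off-diagonal row sum as r_i(A) = r_i^S(A) + r_i^{S̄}(A), where r_i^T(A) = ∑_{j ∈ T, j ≠ i} |A i j|. Then every eigenvalue λ of A lies in the union, over i ∈ S, of the sets {z : |z - A i i| ≤ r_i^S(A)}, together with the union over i ∈ S, j ∈ S̄ of the sets {z : (|z - A i i| - r_i^S(A))(|z - A j j| - r_j^{S̄}(A)) ≤ r_i^{S̄}(A) r_j^S(A)} ∩ {z : |z - A i i| ≤ r_i(A)}, together with the symmetric sets obtained by swapping the roles of S and S̄. -/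
/-- `r_i^T(A) = ∑_{j ∈ T, j ≠ i} |A i j|`. -/
noncomputable def rT {n : ℕ} (A : Matrix (Fin n) (Fin n) ℂ) (T : Finset (Fin n))
    (i : Fin n) : ℝ :=
  ∑ j ∈ T.erase i, ‖A i j‖

lemma rT_nonneg {n : ℕ} (A : Matrix (Fin n) (Fin n) ℂ) (T : Finset (Fin n)) (i : Fin n) :
    0 ≤ rT A T i :=
  Finset.sum_nonneg fun _ _ => norm_nonneg _

lemma row_bound {n : ℕ} (A : Matrix (Fin n) (Fin n) ℂ) (lam : ℂ) (x : Fin n → ℂ)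
    (heig : A.mulVec x = lam • x) (S : Finset (Fin n)) (i : Fin n) (hi : i ∈ S)
    (Mp Mq : ℝ) (hMp : ∀ j ∈ S, ‖x j‖ ≤ Mp)
    (hMq : ∀ j ∈ Sᶜ, ‖x j‖ ≤ Mq) (hMq0 : 0 ≤ Mq) :
    ‖lam - A i i‖ * ‖x i‖ ≤ rT A S i * Mp + rT A Sᶜ i * Mq := by
  have hrow : ∑ j, A i j * x j = lam * x i := by
    have := congrFun heig i
    simpa [Matrix.mulVec, dotProduct] using this
  have hkey : (lam - A i i) * x i = ∑ j ∈ Finset.univ.erase i, A i j * x j := by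
    rw [Finset.sum_erase_eq_sub (Finset.mem_univ i), hrow]
    ring
  have hsplit : Finset.univ.erase i = S.erase i ∪ Sᶜ.erase i := by
    rw [← Finset.erase_union_distrib, Finset.union_compl]
  have hdisj : Disjoint (S.erase i) (Sᶜ.erase i) :=
    Disjoint.mono (Finset.erase_subset _ _) (Finset.erase_subset _ _) disjoint_compl_right
  have h1 : ‖lam - A i i‖ * ‖x i‖ ≤
      ∑ j ∈ S.erase i, ‖A i j‖ * ‖x j‖ +
      ∑ j ∈ Sᶜ.erase i, ‖A i j‖ * ‖x j‖ := by
    rw [← Finset.sum_union hdisj, ← hsplit, ← norm_mul, hkey]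
    refine le_trans (norm_sum_le _ _) (le_of_eq ?_)
    exact Finset.sum_congr rfl fun j _ => norm_mul _ _
  have hCe : Sᶜ.erase i = Sᶜ := Finset.erase_eq_of_notMem (by simp [hi])
  have h2 : ∑ j ∈ S.erase i, ‖A i j‖ * ‖x j‖ ≤ rT A S i * Mp := by
    rw [rT, Finset.sum_mul]
    refine Finset.sum_le_sum fun j hj => ?_
    exact mul_le_mul_of_nonneg_left (hMp j (Finset.mem_of_mem_erase hj)) (norm_nonneg _)
  have h3 : ∑ j ∈ Sᶜ.erase i, ‖A i j‖ * ‖x j‖ ≤ rT A Sᶜ i * Mq := by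
    rw [rT, Finset.sum_mul]
    refine Finset.sum_le_sum fun j hj => ?_
    exact mul_le_mul_of_nonneg_left (hMq j (by rw [hCe] at hj; exact hj))
      (norm_nonneg _)
  linarith

lemma key {n : ℕ} (A : Matrix (Fin n) (Fin n) ℂ) (lam : ℂ) (x : Fin n → ℂ)
    (heig : A.mulVec x = lam • x) (S : Finset (Fin n)) (p q : Fin n)
    (hp : p ∈ S) (hq : q ∈ Sᶜ)
    (hmaxS : ∀ j ∈ S, ‖x j‖ ≤ ‖x p‖)
    (hmaxC : ∀ j ∈ Sᶜ, ‖x j‖ ≤ ‖x q‖)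
    (hqp : ‖x q‖ ≤ ‖x p‖)
    (hpos : 0 < ‖x p‖) :
    (∃ i ∈ S, ‖lam - A i i‖ ≤ rT A S i) ∨
    (∃ i ∈ S, ∃ j ∈ Sᶜ,
      (‖lam - A i i‖ - rT A S i) * (‖lam - A j j‖ - rT A Sᶜ j) ≤
        rT A Sᶜ i * rT A S j ∧
      ‖lam - A i i‖ ≤ rT A S i + rT A Sᶜ i) := by
  have H1 := row_bound A lam x heig S p hp (‖x p‖) (‖x q‖)
    hmaxS hmaxC (norm_nonneg _)
  have H2 := row_bound A lam x heig Sᶜ q hq (‖x q‖) (‖x p‖)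
    hmaxC (by intro j hj; rw [compl_compl] at hj; exact hmaxS j hj) hpos.le
  rw [compl_compl] at H2
  by_cases hcase : ‖lam - A p p‖ ≤ rT A S p
  · exact Or.inl ⟨p, hp, hcase⟩
  · push_neg at hcase
    refine Or.inr ⟨p, hp, q, hq, ?_, ?_⟩
    · -- product inequality
      have ha : 0 < ‖lam - A p p‖ - rT A S p := by linarith
      have hA1 : (‖lam - A p p‖ - rT A S p) * ‖x p‖ ≤
          rT A Sᶜ p * ‖x q‖ := by nlinarith
      have hxq : 0 < ‖x q‖ := by
        by_contra h
        push_neg at h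
        have hz : ‖x q‖ = 0 := le_antisymm h (norm_nonneg _)
        rw [hz, mul_zero] at hA1
        nlinarith
      have hA2 : (‖lam - A q q‖ - rT A Sᶜ q) * ‖x q‖ ≤
          rT A S q * ‖x p‖ := by nlinarith
      by_cases hc : ‖lam - A q q‖ - rT A Sᶜ q ≤ 0
      · have := mul_nonneg (rT_nonneg A Sᶜ p) (rT_nonneg A S q)
        nlinarith
      · push_neg at hc
        nlinarith [mul_le_mul hA1 hA2 (mul_nonneg hc.le (norm_nonneg _)) (mul_nonneg (rT_nonneg A Sᶜ p) (norm_nonneg _)), mul_pos hpos hxq, mul_nonneg (rT_nonneg A Sᶜ p) (rT_nonneg A S q)]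
    · have := rT_nonneg A Sᶜ p
      nlinarith

theorem stmt_4 {n : ℕ} (hn : 2 ≤ n) (A : Matrix (Fin n) (Fin n) ℂ)
    (S : Finset (Fin n)) (hS : S.Nonempty) (hSc : Sᶜ.Nonempty)
    (lam : ℂ) (x : Fin n → ℂ) (hx : x ≠ 0) (heig : A.mulVec x = lam • x) :
    (∃ i ∈ S, ‖lam - A i i‖ ≤ rT A S i) ∨
    (∃ i ∈ S, ∃ j ∈ Sᶜ,
      (‖lam - A i i‖ - rT A S i) * (‖lam - A j j‖ - rT A Sᶜ j) ≤
        rT A Sᶜ i * rT A S j ∧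
      ‖lam - A i i‖ ≤ rT A S i + rT A Sᶜ i) ∨
    (∃ i ∈ Sᶜ, ‖lam - A i i‖ ≤ rT A Sᶜ i) ∨
    (∃ i ∈ Sᶜ, ∃ j ∈ S,
      (‖lam - A i i‖ - rT A Sᶜ i) * (‖lam - A j j‖ - rT A S j) ≤
        rT A S i * rT A Sᶜ j ∧
      ‖lam - A i i‖ ≤ rT A S i + rT A Sᶜ i) := by
  obtain ⟨p, hp, hmaxS⟩ := S.exists_max_image (fun j => ‖x j‖) hS
  obtain ⟨q, hq, hmaxC⟩ := Sᶜ.exists_max_image (fun j => ‖x j‖) hSc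
  obtain ⟨k, hk⟩ : ∃ k, x k ≠ 0 := by
    by_contra h
    push_neg at h
    exact hx (funext h)
  have hk' : 0 < ‖x k‖ := by
    simpa [norm_pos_iff] using hk
  have hkmax : ‖x k‖ ≤ max (‖x p‖) (‖x q‖) := by
    by_cases hkS : k ∈ S
    · exact le_max_of_le_left (hmaxS k hkS)
    · exact le_max_of_le_right (hmaxC k (by simpa using hkS))
  rcases le_total (‖x q‖) (‖x p‖) with hle | hle
  · have hpos : 0 < ‖x p‖ := by
      rw [max_eq_left hle] at hkmax; linarith
    rcases key A lam x heig S p q hp hq hmaxS hmaxC hle hpos with h | h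
    · exact Or.inl h
    · exact Or.inr (Or.inl h)
  · have hpos : 0 < ‖x q‖ := by
      rw [max_eq_right hle] at hkmax; linarith
    have hp' : p ∈ Sᶜᶜ := by rwa [compl_compl]
    have h := key A lam x heig Sᶜ q p hq hp' hmaxC
      (by intro j hj; rw [compl_compl] at hj; exact hmaxS j hj) hle hpos
    rw [compl_compl] at h
    rcases h with h | ⟨i, hi, j, hj, h1, h2⟩
    · exact Or.inr (Or.inr (Or.inl h))
    · exact Or.inr (Or.inr (Or.inr ⟨i, hi, j, hj, by linarith, by linarith⟩))
end

section
/- Let λ be an eigenvalue of an n×n complex matrix A with eigenvector x, let S be a nonempty proper subset of indices, and let p ∈ S attain the maximum of |x_i| over i ∈ S and q ∈ S̄ attain the maximum over i ∈ S̄. If |x_p| ≥ |x_q|, then (|λ - A p p| - r_p^S(A)) |x_p| ≤ r_p^{S̄}(A) |x_q|, where r_p^T(A) = ∑_{j ∈ T, j ≠ p} |A p j|. -/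
theorem stmt_5 {n : ℕ} (A : Matrix (Fin n) (Fin n) ℂ)
    (S : Finset (Fin n)) (hS : S.Nonempty) (hSc : Sᶜ.Nonempty)
    (lam : ℂ) (x : Fin n → ℂ) (hx : x ≠ 0) (heig : A.mulVec x = lam • x)
    (p q : Fin n) (hp : p ∈ S) (hq : q ∈ Sᶜ)
    (hpmax : ∀ i ∈ S, ‖x i‖ ≤ ‖x p‖)
    (hqmax : ∀ i ∈ Sᶜ, ‖x i‖ ≤ ‖x q‖)
    (hpq : ‖x q‖ ≤ ‖x p‖) :
    (‖lam - A p p‖ - rT A S p) * ‖x p‖ ≤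
      rT A Sᶜ p * ‖x q‖ := by
  have hrow : (A.mulVec x) p = lam * x p := by
    rw [heig]; rfl
  have hsum : (lam - A p p) * x p = ∑ j ∈ Finset.univ.erase p, A p j * x j := by
    have : ∑ j, A p j * x j = lam * x p := hrow
    rw [← Finset.add_sum_erase _ _ (Finset.mem_univ p)] at this
    rw [sub_mul, ← this]; ring
  have hsplit : Finset.univ.erase p = (S.erase p) ∪ (Sᶜ.erase p) := by
    ext j
    simp [Finset.mem_erase, or_and_right, em]
    tauto
  have hdisj : Disjoint (S.erase p) (Sᶜ.erase p) := by
    apply Finset.disjoint_left.2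
    intro a ha hb
    exact absurd (Finset.mem_of_mem_erase hb) (by simpa using Finset.mem_of_mem_erase ha)
  have key : ‖lam - A p p‖ * ‖x p‖ ≤
      rT A S p * ‖x p‖ + rT A Sᶜ p * ‖x q‖ := by
    rw [← norm_mul, hsum, hsplit, Finset.sum_union hdisj]
    calc ‖∑ j ∈ S.erase p, A p j * x j + ∑ j ∈ Sᶜ.erase p, A p j * x j‖
        ≤ ‖∑ j ∈ S.erase p, A p j * x j‖ +
          ‖∑ j ∈ Sᶜ.erase p, A p j * x j‖ := norm_add_le _ _
      _ ≤ (∑ j ∈ S.erase p, ‖A p j‖ * ‖x j‖) +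
          (∑ j ∈ Sᶜ.erase p, ‖A p j‖ * ‖x j‖) := by
          gcongr <;> exact (norm_sum_le _ _).trans (le_of_eq (Finset.sum_congr rfl fun j _ => norm_mul _ _))
      _ ≤ rT A S p * ‖x p‖ + rT A Sᶜ p * ‖x q‖ := by
          unfold rT
          rw [Finset.sum_mul, Finset.sum_mul]
          gcongr with j hj j hj
          · exact hpmax j (Finset.mem_of_mem_erase hj)
          · exact hqmax j (Finset.mem_of_mem_erase hj)
  nlinarith [key]
end
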